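/- Let A₁, B₁, C₁ and A₂, B₂, C₂ be symmetric matrices with C₂ positive definite, C₁ negative definite, and C₁⊗B₂ − B₁⊗C₂ positive definite; further assume B₁ is negative definite. Let u₀ minimize the Rayleigh quotient u ↦ (uᵀC₁u)/(uᵀB₁u) over nonzero u, let t = (u₀ᵀC₁u₀)/(u₀ᵀB₁u₀), and for sufficiently small ε > 0 define C₁' = C₁ − (t−ε)B₁ and C₂' = C₂ − (t−ε)B₂. Then C₁' is negative definite and C₂' is positive definite. -/

import Mathlib

open Matrix Kronecker

private lemma stmt8_quad_smul {m : ℕ} (M : Matrix (Fin m) (Fin m) ℝ) (c : ℝ) (v : Fin m → ℝ) :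
    (c • v) ⬝ᵥ M *ᵥ (c • v) = c ^ 2 * (v ⬝ᵥ M *ᵥ v) := by
  simp [Matrix.mulVec_smul, smul_dotProduct, dotProduct_smul, smul_eq_mul]; ring

private lemma stmt8_quad_cont {m : ℕ} (M : Matrix (Fin m) (Fin m) ℝ) :
    Continuous fun v : Fin m → ℝ => v ⬝ᵥ M *ᵥ v := by
  simp only [dotProduct, mulVec]
  fun_prop

private lemma stmt8_kron_quad {n m : ℕ} (A : Matrix (Fin n) (Fin n) ℝ)
    (B : Matrix (Fin m) (Fin m) ℝ) (u : Fin n → ℝ) (v : Fin m → ℝ) :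
    (fun p : Fin n × Fin m => u p.1 * v p.2) ⬝ᵥ
        (A ⊗ₖ B) *ᵥ (fun p : Fin n × Fin m => u p.1 * v p.2)
      = (u ⬝ᵥ A *ᵥ u) * (v ⬝ᵥ B *ᵥ v) := by
  have hx : ∀ p : Fin n × Fin m,
      ((A ⊗ₖ B) *ᵥ fun p : Fin n × Fin m => u p.1 * v p.2) p
        = (A *ᵥ u) p.1 * (B *ᵥ v) p.2 := by
    intro p
    simp only [mulVec, dotProduct, kroneckerMap_apply, Fintype.sum_prod_type]
    rw [Finset.sum_mul_sum]
    exact Finset.sum_congr rfl fun k _ => Finset.sum_congr rfl fun l _ => by ring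
  simp only [dotProduct, hx, Fintype.sum_prod_type]
  rw [Finset.sum_mul_sum]
  exact Finset.sum_congr rfl fun i _ => Finset.sum_congr rfl fun j _ => by ring

private lemma stmt8_herm {k : ℕ} (B C : Matrix (Fin k) (Fin k) ℝ)
    (hB : B.IsSymm) (hC : C.IsSymm) (s : ℝ) : (C - s • B).IsHermitian := by
  have h : (C - s • B).IsSymm := by
    unfold Matrix.IsSymm at *
    rw [transpose_sub, transpose_smul, hB, hC]
  show (C - s • B)ᴴ = C - s • B
  rw [conjTranspose_eq_transpose_of_trivial]
  exact h

/-- Affine-transformation normalization: if `u₀` minimizes `(uᵀC₁u)/(uᵀB₁u)` with value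
`t`, then for all sufficiently small `ε > 0` the matrices `C₁ − (t−ε)B₁` and
`C₂ − (t−ε)B₂` are negative and positive definite respectively. -/
theorem stmt_8 {n m : ℕ}
    (A₁ B₁ C₁ : Matrix (Fin n) (Fin n) ℝ) (A₂ B₂ C₂ : Matrix (Fin m) (Fin m) ℝ)
    (hA₁ : A₁.IsSymm) (hB₁ : B₁.IsSymm) (hC₁ : C₁.IsSymm)
    (hA₂ : A₂.IsSymm) (hB₂ : B₂.IsSymm) (hC₂ : C₂.IsSymm)
    (hC₂pos : C₂.PosDef) (hC₁neg : (-C₁).PosDef)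
    (hdef : (C₁ ⊗ₖ B₂ - B₁ ⊗ₖ C₂).PosDef)
    (hB₁neg : (-B₁).PosDef)
    (u₀ : Fin n → ℝ) (hu₀ : u₀ ≠ 0)
    (t : ℝ) (ht : t = (u₀ ⬝ᵥ C₁.mulVec u₀) / (u₀ ⬝ᵥ B₁.mulVec u₀))
    (hmin : ∀ u : Fin n → ℝ, u ≠ 0 →
      t ≤ (u ⬝ᵥ C₁.mulVec u) / (u ⬝ᵥ B₁.mulVec u)) :
    ∃ ε₀ > 0, ∀ ε : ℝ, 0 < ε → ε ≤ ε₀ →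
      (-(C₁ - (t - ε) • B₁)).PosDef ∧ (C₂ - (t - ε) • B₂).PosDef := by
  -- basic facts
  have hb : ∀ u : Fin n → ℝ, u ≠ 0 → u ⬝ᵥ B₁ *ᵥ u < 0 := by
    intro u hu
    have h := hB₁neg.dotProduct_mulVec_pos hu
    simp only [star_trivial, neg_mulVec, dotProduct_neg] at h
    linarith
  have hb₀ : u₀ ⬝ᵥ B₁ *ᵥ u₀ < 0 := hb u₀ hu₀
  have ha₀ : u₀ ⬝ᵥ C₁ *ᵥ u₀ = t * (u₀ ⬝ᵥ B₁ *ᵥ u₀) := by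
    rw [ht, div_mul_cancel₀ _ (ne_of_lt hb₀)]
  -- Part 1 (any ε > 0): negative definiteness of C₁ - (t-ε)B₁
  have part1 : ∀ ε : ℝ, 0 < ε → (-(C₁ - (t - ε) • B₁)).PosDef := by
    intro ε hε
    refine .of_dotProduct_mulVec_pos (stmt8_herm B₁ C₁ hB₁ hC₁ (t - ε)).neg fun x hx => ?_
    have hbx := hb x hx
    have hq := hmin x hx
    rw [le_div_iff_of_neg hbx] at hq
    simp only [star_trivial, neg_mulVec, sub_mulVec, smul_mulVec,
      dotProduct_neg, dotProduct_sub, dotProduct_smul, smul_eq_mul]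
    nlinarith [mul_pos hε (neg_pos.mpr hbx)]
  -- Part 2 base: C₂ - t • B₂ is positive definite
  have hM₀ : (C₂ - t • B₂).PosDef := by
    refine .of_dotProduct_mulVec_pos (stmt8_herm B₂ C₂ hB₂ hC₂ t) fun v hv => ?_
    set x : Fin n × Fin m → ℝ := fun p => u₀ p.1 * v p.2 with hxdef
    have hxne : x ≠ 0 := by
      intro h0
      obtain ⟨i, hi⟩ := Function.ne_iff.mp hu₀
      obtain ⟨j, hj⟩ := Function.ne_iff.mp hv
      have h1 := congrFun h0 (i, j)
      simp only [hxdef, Pi.zero_apply] at h1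
      rcases mul_eq_zero.mp h1 with h | h
      · exact hi (by simpa using h)
      · exact hj (by simpa using h)
    have h := hdef.dotProduct_mulVec_pos hxne
    simp only [star_trivial, sub_mulVec, dotProduct_sub, hxdef] at h
    rw [stmt8_kron_quad, stmt8_kron_quad] at h
    rw [ha₀] at h
    have hkey : t * (v ⬝ᵥ B₂ *ᵥ v) - v ⬝ᵥ C₂ *ᵥ v < 0 := by
      by_contra hc
      push_neg at hc
      nlinarith
    simp only [star_trivial, sub_mulVec, smul_mulVec, dotProduct_sub,
      dotProduct_smul, smul_eq_mul]
    linarith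
  -- handle the degenerate case m = 0
  rcases isEmpty_or_nonempty (Fin m) with hm | hm
  · refine ⟨1, one_pos, fun ε hε _ => ⟨part1 ε hε, ?_⟩⟩
    refine .of_dotProduct_mulVec_pos (stmt8_herm B₂ C₂ hB₂ hC₂ (t - ε)) fun v hv => ?_
    exact absurd (funext fun i => hm.elim i) hv
  -- compactness argument on the unit sphere
  have hScompact : IsCompact (Metric.sphere (0 : Fin m → ℝ) 1) := isCompact_sphere 0 1
  have hSne : (Metric.sphere (0 : Fin m → ℝ) 1).Nonempty :=
    NormedSpace.sphere_nonempty.mpr zero_le_one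
  obtain ⟨v₁, hv₁S, hL'⟩ := hScompact.exists_isMinOn hSne
    ((stmt8_quad_cont (C₂ - t • B₂)).continuousOn)
  obtain ⟨v₂, hv₂S, hK'⟩ := hScompact.exists_isMaxOn hSne
    ((stmt8_quad_cont B₂).neg.continuousOn)
  have hL : ∀ y ∈ Metric.sphere (0 : Fin m → ℝ) 1,
      v₁ ⬝ᵥ (C₂ - t • B₂) *ᵥ v₁ ≤ y ⬝ᵥ (C₂ - t • B₂) *ᵥ y := fun y hy => hL' hy
  have hK : ∀ y ∈ Metric.sphere (0 : Fin m → ℝ) 1,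
      -(y ⬝ᵥ B₂ *ᵥ y) ≤ -(v₂ ⬝ᵥ B₂ *ᵥ v₂) := fun y hy => hK' hy
  set L : ℝ := v₁ ⬝ᵥ (C₂ - t • B₂) *ᵥ v₁ with hLdef
  set K : ℝ := -(v₂ ⬝ᵥ B₂ *ᵥ v₂) with hKdef
  have hv₁ne : v₁ ≠ 0 := by
    intro h
    rw [mem_sphere_iff_norm, h] at hv₁S
    simp at hv₁S
  have hLpos : 0 < L := by
    have := hM₀.dotProduct_mulVec_pos hv₁ne
    simpa [hLdef] using this
  set Kp : ℝ := max K 0 with hKpdef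
  have hKp0 : 0 ≤ Kp := le_max_right _ _
  refine ⟨L / (Kp + 1), div_pos hLpos (by linarith), fun ε hε hεle => ⟨part1 ε hε, ?_⟩⟩
  refine .of_dotProduct_mulVec_pos (stmt8_herm B₂ C₂ hB₂ hC₂ (t - ε)) fun v hv => ?_
  -- reduce to the unit sphere
  have hvnorm : (0 : ℝ) < ‖v‖ := norm_pos_iff.mpr hv
  set w : Fin m → ℝ := ‖v‖⁻¹ • v with hwdef
  have hwS : w ∈ Metric.sphere (0 : Fin m → ℝ) 1 := by
    rw [mem_sphere_iff_norm, sub_zero, hwdef, norm_smul]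
    simp [abs_of_pos (inv_pos.mpr hvnorm), inv_mul_cancel₀ (ne_of_gt hvnorm)]
  have hvw : v = ‖v‖ • w := by
    rw [hwdef, smul_smul, mul_inv_cancel₀ (ne_of_gt hvnorm), one_smul]
  -- estimate on the sphere
  have hfw : L ≤ w ⬝ᵥ (C₂ - t • B₂) *ᵥ w := hL w hwS
  have hgw : -(w ⬝ᵥ B₂ *ᵥ w) ≤ K := hK w hwS
  have hKKp : K ≤ Kp := le_max_left _ _
  have hε₀ : ε * Kp ≤ L / (Kp + 1) * Kp := by
    exact mul_le_mul_of_nonneg_right hεle hKp0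
  have hquadw : 0 < w ⬝ᵥ (C₂ - (t - ε) • B₂) *ᵥ w := by
    have hexp : w ⬝ᵥ (C₂ - (t - ε) • B₂) *ᵥ w
        = w ⬝ᵥ (C₂ - t • B₂) *ᵥ w + ε * (w ⬝ᵥ B₂ *ᵥ w) := by
      simp only [sub_mulVec, smul_mulVec, dotProduct_sub, dotProduct_smul,
        smul_eq_mul]
      ring
    rw [hexp]
    have h1 : ε * (-(w ⬝ᵥ B₂ *ᵥ w)) ≤ ε * Kp :=
      mul_le_mul_of_nonneg_left (le_trans hgw hKKp) (le_of_lt hε)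
    have h2 : L / (Kp + 1) * Kp < L := by
      rw [div_mul_eq_mul_div, div_lt_iff₀ (by linarith : (0:ℝ) < Kp + 1)]
      nlinarith
    nlinarith
  -- scale back
  have : v ⬝ᵥ (C₂ - (t - ε) • B₂) *ᵥ v = ‖v‖ ^ 2 * (w ⬝ᵥ (C₂ - (t - ε) • B₂) *ᵥ w) := by
    conv_lhs => rw [hvw]
    exact stmt8_quad_smul _ _ _
  have hpos : 0 < v ⬝ᵥ (C₂ - (t - ε) • B₂) *ᵥ v := by
    rw [this]
    exact mul_pos (pow_pos hvnorm 2) hquadw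
  simpa using hpos
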